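/- (Sun) For every odd prime p and 1 ≤ k ≤ p-1, the elementary symmetric polynomial A_k of 1, 2, ..., p-1 satisfies A_k ≡ ((-1)^(k-1)/k)·S_k mod p², where S_k = ∑_{l=1}^{p-1} l^k. -/

import Mathlib

/-- The `k`-th elementary symmetric function of `1, 2, …, n`. -/
def esymmA (n k : ℕ) : ℕ :=
  ∑ t ∈ (Finset.Icc 1 n).powersetCard k, ∏ i ∈ t, i

open Finset MvPolynomial

def succEmb (n : ℕ) : Fin n ↪ ℕ :=
  ⟨fun i => (i : ℕ) + 1, fun a b h => Fin.val_injective (by simpa using h)⟩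

lemma succEmb_apply (n : ℕ) (i : Fin n) : succEmb n i = (i : ℕ) + 1 := rfl

lemma map_univ_succEmb (n : ℕ) : (univ : Finset (Fin n)).map (succEmb n) = Icc 1 n := by
  ext m
  simp only [mem_map, mem_univ, true_and, mem_Icc, succEmb_apply]
  constructor
  · rintro ⟨i, rfl⟩; omega
  · rintro ⟨h1, h2⟩; exact ⟨⟨m - 1, by omega⟩, by simp only [succEmb_apply]; omega⟩

lemma evalEsymm (n j : ℕ) :
    MvPolynomial.eval (fun i : Fin n => ((i : ℕ) + 1 : ℤ)) (esymm (Fin n) ℤ j)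
      = (esymmA n j : ℤ) := by
  rw [esymm, esymmA]
  push_cast
  rw [← map_univ_succEmb n, powersetCard_map, sum_map, map_sum]
  refine Finset.sum_congr rfl fun t _ => ?_
  simp only [RelEmbedding.coe_toEmbedding, mapEmbedding_apply]
  rw [prod_map, map_prod]
  simp [succEmb_apply]

lemma evalPsum (n j : ℕ) :
    MvPolynomial.eval (fun i : Fin n => ((i : ℕ) + 1 : ℤ)) (psum (Fin n) ℤ j)
      = ∑ l ∈ Icc 1 n, (l : ℤ) ^ j := by
  rw [psum]
  simp only [map_sum, eval_pow, eval_X]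
  rw [← map_univ_succEmb n, sum_map]
  simp [succEmb_apply]

lemma newtonInt (n k : ℕ) :
    (k : ℤ) * (esymmA n k : ℤ) = (-1) ^ (k + 1) *
      ∑ a ∈ Finset.HasAntidiagonal.antidiagonal k with a.1 < k,
        (-1 : ℤ) ^ a.1 * (esymmA n a.1 : ℤ) * (∑ l ∈ Icc 1 n, (l : ℤ) ^ a.2) := by
  have h := congrArg (MvPolynomial.eval (fun i : Fin n => ((i : ℕ) + 1 : ℤ)))
    (MvPolynomial.mul_esymm_eq_sum (Fin n) ℤ k)
  simp only [map_mul, map_sum, map_pow, map_neg, map_one, map_natCast, evalEsymm, evalPsum] at h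
  exact h

lemma S_dvd (p j : ℕ) [hp : Fact p.Prime] (h1 : 1 ≤ j) (h2 : j < p - 1) :
    (p : ℤ) ∣ ∑ l ∈ Icc 1 (p - 1), (l : ℤ) ^ j := by
  have hpp := hp.out
  rw [← ZMod.intCast_zmod_eq_zero_iff_dvd]
  push_cast
  have hIcc : Icc 1 (p - 1) = (range p).erase 0 := by
    ext m; simp [mem_range, mem_erase]; omega
  have h0 : ((0 : ℕ) : ZMod p) ^ j = 0 := by
    rw [Nat.cast_zero, zero_pow (by omega)]
  rw [hIcc, Finset.sum_erase (f := fun l : ℕ => ((l : ZMod p)) ^ j) _ h0]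
  have hbij : ∑ l ∈ range p, ((l : ZMod p)) ^ j = ∑ x : ZMod p, x ^ j := by
    haveI : NeZero p := ⟨hpp.ne_zero⟩
    refine Finset.sum_nbij' (fun l => (l : ZMod p)) (fun x => x.val) ?_ ?_ ?_ ?_ ?_
    · intro l _; exact mem_univ _
    · intro x _; exact mem_range.mpr (ZMod.val_lt x)
    · intro l hl; exact ZMod.val_cast_of_lt (mem_range.mp hl)
    · intro x _; exact ZMod.natCast_rightInverse x
    · intro l _; rfl
  rw [hbij]
  exact FiniteField.sum_pow_lt_card_sub_one (K := ZMod p) j (by rw [ZMod.card]; omega)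

lemma E_dvd (p j : ℕ) [hp : Fact p.Prime] (h1 : 1 ≤ j) (h2 : j ≤ p - 2) :
    (p : ℤ) ∣ (esymmA (p - 1) j : ℤ) := by
  have hpp := hp.out
  have hp2 : 2 ≤ p := hpp.two_le
  have hdvd : (p : ℤ) ∣ (j : ℤ) * (esymmA (p - 1) j : ℤ) := by
    rw [newtonInt]
    refine Dvd.dvd.mul_left ?_ _
    refine Finset.dvd_sum fun a ha => ?_
    simp only [mem_filter, Finset.HasAntidiagonal.mem_antidiagonal] at ha
    have hS : (p : ℤ) ∣ ∑ l ∈ Icc 1 (p - 1), (l : ℤ) ^ a.2 :=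
      S_dvd p a.2 (by omega) (by omega)
    exact Dvd.dvd.mul_left hS _
  have hprime : Prime (p : ℤ) := Int.prime_iff_natAbs_prime.mpr (by simpa using hpp)
  rcases (hprime.dvd_mul).mp hdvd with h | h
  · exfalso
    have : p ∣ j := Int.ofNat_dvd.mp h
    have := Nat.le_of_dvd (by omega) this
    omega
  · exact h

lemma key (p k : ℕ) [hp : Fact p.Prime] (hk1 : 1 ≤ k) (hk2 : k ≤ p - 1) :
    (p : ℤ) ^ 2 ∣ ((k : ℤ) * (esymmA (p - 1) k : ℤ)
      - (-1) ^ (k - 1) * ∑ l ∈ Icc 1 (p - 1), (l : ℤ) ^ k) := by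
  have hpp := hp.out
  have hp2 : 2 ≤ p := hpp.two_le
  have hsplit : ({a ∈ Finset.HasAntidiagonal.antidiagonal k | a.1 < k} : Finset (ℕ × ℕ))
      = insert (0, k) {a ∈ Finset.HasAntidiagonal.antidiagonal k | 0 < a.1 ∧ a.1 < k} := by
    ext a
    simp only [mem_filter, Finset.HasAntidiagonal.mem_antidiagonal, Finset.mem_insert, Prod.ext_iff]
    constructor
    · rintro ⟨h1, h2⟩
      rcases Nat.eq_zero_or_pos a.1 with h | h
      · left; omega
      · right; exact ⟨h1, h, h2⟩
    · rintro (⟨h1, h2⟩ | ⟨h1, h2, h3⟩) <;> omega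
  have hnotmem : (0, k) ∉ ({a ∈ Finset.HasAntidiagonal.antidiagonal k | 0 < a.1 ∧ a.1 < k} : Finset (ℕ × ℕ)) := by
    simp
  have he0 : (esymmA (p - 1) 0 : ℤ) = 1 := by simp [esymmA]
  have hN := newtonInt (p - 1) k
  rw [hsplit, Finset.sum_insert hnotmem] at hN
  simp only [pow_zero, he0, one_mul] at hN
  set R : ℤ := ∑ a ∈ {a ∈ Finset.HasAntidiagonal.antidiagonal k | 0 < a.1 ∧ a.1 < k},
      (-1 : ℤ) ^ a.1 * (esymmA (p - 1) a.1 : ℤ) * (∑ l ∈ Icc 1 (p - 1), (l : ℤ) ^ a.2) with hR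
  have hRdvd : (p : ℤ) ^ 2 ∣ R := by
    rw [hR]
    refine Finset.dvd_sum fun a ha => ?_
    simp only [mem_filter, Finset.HasAntidiagonal.mem_antidiagonal] at ha
    have hE : (p : ℤ) ∣ (esymmA (p - 1) a.1 : ℤ) := E_dvd p a.1 (by omega) (by omega)
    have hS : (p : ℤ) ∣ ∑ l ∈ Icc 1 (p - 1), (l : ℤ) ^ a.2 := S_dvd p a.2 (by omega) (by omega)
    rw [mul_assoc, pow_two]
    exact Dvd.dvd.mul_left (mul_dvd_mul hE hS) _
  have hsign : ((-1 : ℤ)) ^ (k + 1) = (-1) ^ (k - 1) := by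
    have : k + 1 = (k - 1) + 2 := by omega
    rw [this, pow_add]
    simp
  rw [hN, hsign]
  have : (-1 : ℤ) ^ (k - 1) * (∑ l ∈ Icc 1 (p - 1), (l : ℤ) ^ k + R)
      - (-1) ^ (k - 1) * ∑ l ∈ Icc 1 (p - 1), (l : ℤ) ^ k = (-1) ^ (k - 1) * R := by ring
  rw [this]
  exact Dvd.dvd.mul_left hRdvd _

theorem stmt_12 (p k : ℕ) [hp : Fact p.Prime] (hodd : Odd p)
    (hk1 : 1 ≤ k) (hk2 : k ≤ p - 1) :
    ∃ z : ℤ_[p], (esymmA (p - 1) k : ℚ_[p]) =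
      ((-1 : ℚ_[p]) ^ (k - 1) / (k : ℚ_[p])) *
        (∑ l ∈ Finset.Icc 1 (p - 1), (l : ℚ_[p]) ^ k)
      + (p : ℚ_[p]) ^ 2 * z := by
  have hpp := hp.out
  have hp2 : 2 ≤ p := hpp.two_le
  obtain ⟨m, hm⟩ := key p k hk1 hk2
  -- (k : ℤ_[p]) is a unit
  have hknd : ¬ ((p : ℤ) ∣ (k : ℤ)) := by
    intro h
    have : p ∣ k := Int.ofNat_dvd.mp h
    have := Nat.le_of_dvd (by omega) this
    omega
  have hnorm : ‖((k : ℤ) : ℤ_[p])‖ = 1 := by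
    refine le_antisymm (PadicInt.norm_le_one _) ?_
    by_contra h
    push_neg at h
    exact hknd ((PadicInt.norm_int_lt_one_iff_dvd _).mp h)
  have hu : IsUnit ((k : ℤ) : ℤ_[p]) := PadicInt.isUnit_iff.mpr hnorm
  obtain ⟨u, hu⟩ := hu
  refine ⟨(m : ℤ_[p]) * ↑u⁻¹, ?_⟩
  have hk0 : (k : ℚ_[p]) ≠ 0 := by
    exact_mod_cast Nat.cast_ne_zero.mpr (by omega)
  -- the inverse relation in ℚ_[p]
  have hcinv : ((↑(u⁻¹) : ℤ_[p]) : ℚ_[p]) * (k : ℚ_[p]) = 1 := by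
    have : ((u⁻¹ : ℤ_[p]ˣ) : ℤ_[p]) * ((k : ℤ) : ℤ_[p]) = 1 := by
      rw [← hu]; exact u.inv_mul
    have h2 := congrArg (fun z : ℤ_[p] => (z : ℚ_[p])) this
    push_cast at h2 ⊢
    convert h2 using 2
  -- main equation over ℚ_[p]
  have hQ : (k : ℚ_[p]) * (esymmA (p - 1) k : ℚ_[p])
      = (-1 : ℚ_[p]) ^ (k - 1) * (∑ l ∈ Finset.Icc 1 (p - 1), (l : ℚ_[p]) ^ k)
        + (p : ℚ_[p]) ^ 2 * (m : ℚ_[p]) := by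
    have := congrArg (fun z : ℤ => (z : ℚ_[p])) (sub_eq_iff_eq_add.mp hm)
    push_cast at this
    linear_combination this
  have hz : (((m : ℤ_[p]) * ↑u⁻¹ : ℤ_[p]) : ℚ_[p])
      = (m : ℚ_[p]) * ((↑(u⁻¹) : ℤ_[p]) : ℚ_[p]) := by push_cast; ring
  rw [hz]
  field_simp
  linear_combination hQ - (p : ℚ_[p]) ^ 2 * (m : ℚ_[p]) * hcinv
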